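/- Let G be a connected graph with n vertices and let u∨G denote the join of a single new vertex u with G. Then A_p(u∨G)^p = Z_p(complement of G) + A_p(G)^p. -/

import Mathlib

open Finset

/-- The general Albertson irregularity index. -/
noncomputable def Ap {V : Type*} [Fintype V] (G : SimpleGraph V) [DecidableRel G.Adj]
    (p : ℝ) : ℝ :=
  ((∑ u : V, ∑ v ∈ G.neighborFinset u,
      |(G.degree u : ℝ) - (G.degree v : ℝ)| ^ p) / 2) ^ (1 / p)

/-- The first general Zagreb index `Z_p(H) = ∑_{v∈V(H)} d(v)^p`. -/
noncomputable def Zp {W : Type*} [Fintype W] (H : SimpleGraph W) [DecidableRel H.Adj]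
    (p : ℝ) : ℝ :=
  ∑ w : W, (H.degree w : ℝ) ^ p

/-- The join `u ∨ G`: a new vertex (`none`) adjacent to every vertex of `G`. -/
def cone {V : Type*} (G : SimpleGraph V) : SimpleGraph (Option V) where
  Adj x y :=
    (∃ v, x = none ∧ y = some v) ∨ (∃ v, x = some v ∧ y = none) ∨
    (∃ a b, x = some a ∧ y = some b ∧ G.Adj a b)
  symm := by
    constructor
    rintro x y (⟨v, hx, hy⟩ | ⟨v, hx, hy⟩ | ⟨a, b, hx, hy, h⟩)
    · exact Or.inr (Or.inl ⟨v, hy, hx⟩)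
    · exact Or.inl ⟨v, hy, hx⟩
    · exact Or.inr (Or.inr ⟨b, a, hy, hx, h.symm⟩)
  loopless := by
    constructor
    rintro x (⟨v, hx, hy⟩ | ⟨v, hx, hy⟩ | ⟨a, b, hx, hy, h⟩) <;> subst hx <;> simp_all

instance coneAdjDecidable {V : Type*} [Fintype V] [DecidableEq V]
    (G : SimpleGraph V) [DecidableRel G.Adj] : DecidableRel (cone G).Adj := fun x y => by
  unfold cone
  infer_instance

lemma cone_nbr_none {V : Type*} [Fintype V] [DecidableEq V]
    (G : SimpleGraph V) [DecidableRel G.Adj] :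
    (cone G).neighborFinset (none : Option V) = univ.image some := by
  ext y
  cases y <;> rw [SimpleGraph.mem_neighborFinset] <;> simp [cone]

lemma cone_nbr_some {V : Type*} [Fintype V] [DecidableEq V]
    (G : SimpleGraph V) [DecidableRel G.Adj] (a : V) :
    (cone G).neighborFinset (some a)
      = insert none ((G.neighborFinset a).image some) := by
  ext y
  cases y <;> rw [SimpleGraph.mem_neighborFinset] <;> simp [cone]

lemma cone_deg_none {V : Type*} [Fintype V] [DecidableEq V]
    (G : SimpleGraph V) [DecidableRel G.Adj] :
    (cone G).degree (none : Option V) = Fintype.card V := by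
  rw [SimpleGraph.degree, cone_nbr_none,
    Finset.card_image_of_injective _ (Option.some_injective V), Finset.card_univ]

lemma cone_deg_some {V : Type*} [Fintype V] [DecidableEq V]
    (G : SimpleGraph V) [DecidableRel G.Adj] (a : V) :
    (cone G).degree (some a) = G.degree a + 1 := by
  rw [SimpleGraph.degree, cone_nbr_some, Finset.card_insert_of_notMem (by simp),
    Finset.card_image_of_injective _ (Option.some_injective V)]
  rfl

lemma Ap_pow {W : Type*} [Fintype W] (H : SimpleGraph W) [DecidableRel H.Adj]
    {p : ℝ} (hp : 0 < p) :
    Ap H p ^ p = (∑ u : W, ∑ v ∈ H.neighborFinset u,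
      |(H.degree u : ℝ) - (H.degree v : ℝ)| ^ p) / 2 := by
  have h0 : (0:ℝ) ≤ (∑ u : W, ∑ v ∈ H.neighborFinset u,
      |(H.degree u : ℝ) - (H.degree v : ℝ)| ^ p) / 2 := by
    refine div_nonneg ?_ (by norm_num)
    exact Finset.sum_nonneg fun u _ => Finset.sum_nonneg fun v _ =>
      Real.rpow_nonneg (abs_nonneg _) p
  rw [Ap, ← Real.rpow_mul h0, one_div, inv_mul_cancel₀ hp.ne', Real.rpow_one]

theorem stmt8 {V : Type*} [Fintype V] [DecidableEq V]
    (G : SimpleGraph V) [DecidableRel G.Adj] (hG : G.Connected)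
    (p : ℝ) (hp : 0 < p) :
    Ap (cone G) p ^ p = Zp Gᶜ p + Ap G p ^ p := by
  rw [Ap_pow _ hp, Ap_pow _ hp]
  have hcast : ∀ v : V, ((Gᶜ.degree v : ℝ)) = (Fintype.card V : ℝ) - (G.degree v + 1) := by
    intro v
    have h1 : G.degree v + 1 ≤ Fintype.card V := G.degree_lt_card_verts v
    rw [SimpleGraph.degree_compl, Nat.sub_sub, Nat.cast_sub (by omega)]
    push_cast
    ring
  have habs : ∀ v : V,
      |((cone G).degree (none : Option V) : ℝ) - ((cone G).degree (some v) : ℝ)| ^ p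
        = (Gᶜ.degree v : ℝ) ^ p := by
    intro v
    rw [cone_deg_none, cone_deg_some]
    have h1 : (G.degree v : ℝ) + 1 ≤ (Fintype.card V : ℝ) := by
      exact_mod_cast G.degree_lt_card_verts v
    have h2 : |(Fintype.card V : ℝ) - ((G.degree v + 1 : ℕ) : ℝ)| = (Gᶜ.degree v : ℝ) := by
      rw [abs_of_nonneg (by push_cast; linarith), hcast v]
      push_cast
      ring
    rw [h2]
  have hsum : (∑ u : Option V, ∑ v ∈ (cone G).neighborFinset u,
      |((cone G).degree u : ℝ) - ((cone G).degree v : ℝ)| ^ p)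
      = 2 * Zp Gᶜ p + ∑ u : V, ∑ v ∈ G.neighborFinset u,
        |(G.degree u : ℝ) - (G.degree v : ℝ)| ^ p := by
    rw [Fintype.sum_option]
    have h1 : (∑ v ∈ (cone G).neighborFinset (none : Option V),
        |((cone G).degree (none : Option V) : ℝ) - ((cone G).degree v : ℝ)| ^ p)
        = Zp Gᶜ p := by
      rw [cone_nbr_none, Finset.sum_image (fun a _ b _ h => Option.some_injective V h), Zp]
      exact Finset.sum_congr rfl fun v _ => habs v
    have h2 : ∀ a : V, (∑ v ∈ (cone G).neighborFinset (some a),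
        |((cone G).degree (some a) : ℝ) - ((cone G).degree v : ℝ)| ^ p)
        = (Gᶜ.degree a : ℝ) ^ p + ∑ b ∈ G.neighborFinset a,
          |(G.degree a : ℝ) - (G.degree b : ℝ)| ^ p := by
      intro a
      rw [cone_nbr_some, Finset.sum_insert (by simp),
        Finset.sum_image (fun x _ y _ h => Option.some_injective V h)]
      congr 1
      · rw [abs_sub_comm]; exact habs a
      · refine Finset.sum_congr rfl fun b _ => ?_
        rw [cone_deg_some, cone_deg_some]
        congr 2
        push_cast
        ring
    rw [h1, Finset.sum_congr rfl fun a _ => h2 a, Finset.sum_add_distrib]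
    rw [Zp]
    ring
  rw [hsum]
  ring
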